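/- Let S be a commutative unital semigroup and T ⊆ S an ideal (S·T ⊆ T). Suppose s ∈ S and A is a sequence in S of length exactly D(S,T) such that s·π(A) ∈ T, where π(A) is the product of A. Then there exists a proper subsequence A' ⊊ A with s·π(A') = s·π(A). -/

import Mathlib

/-- A list (sequence) in a commutative monoid is reducible if a proper
subsequence has the same product. -/
def Reducible {M : Type*} [CommMonoid M] (A : List M) : Prop :=
  ∃ B : List M, List.Sublist B A ∧ B.length < A.length ∧ B.prod = A.prod

/-- The Davenport constant: the least positive `n` such that every sequence of
length `n` is reducible (`⊤` if none exists). -/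
noncomputable def davenport (M : Type*) [CommMonoid M] : ℕ∞ :=
  sInf {k : ℕ∞ | ∃ n : ℕ, k = n ∧ 0 < n ∧ ∀ A : List M, A.length = n → Reducible A}

/-- An ideal of a commutative monoid. -/
def IsMulIdeal {M : Type*} [CommMonoid M] (T : Set M) : Prop :=
  ∀ s t : M, t ∈ T → s * t ∈ T

/-- The relative Davenport constant `D(S, T)`: the least positive `n` such
that every sequence of length `n` with product in `T` is reducible. -/
noncomputable def davenportRel (M : Type*) [CommMonoid M] (T : Set M) : ℕ∞ :=
  sInf {k : ℕ∞ | ∃ n : ℕ, k = n ∧ 0 < n ∧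
    ∀ A : List M, A.length = n → A.prod ∈ T → Reducible A}

/-- `(S, T)` is a unit-stabilized pair. -/
def UnitStabilizedPair (M : Type*) [CommMonoid M] (T : Set M) : Prop :=
  ∀ a b : M, a * b ∉ T →
    {u : Mˣ | (u : M) * a = a} = {u : Mˣ | (u : M) * (a * b) = a * b} →
    ∃ u : Mˣ, a * b = a * u

theorem rel_lemma {S : Type*} [CommMonoid S] (T : Set S) (hT : IsMulIdeal T)
    (s : S) (A : List S) (hlen : (A.length : ℕ∞) = davenportRel S T)
    (hmem : s * A.prod ∈ T) :
    ∃ A' : List S, List.Sublist A' A ∧ A'.length < A.length ∧ s * A'.prod = s * A.prod := by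
  classical
  set 𝒮 : Set ℕ∞ := {k : ℕ∞ | ∃ n : ℕ, k = n ∧ 0 < n ∧
    ∀ A : List S, A.length = n → A.prod ∈ T → Reducible A} with h𝒮
  have hne : 𝒮.Nonempty := by
    by_contra h
    rw [Set.not_nonempty_iff_eq_empty] at h
    rw [davenportRel, ← h𝒮, h, sInf_empty] at hlen
    exact (ENat.coe_ne_top A.length) hlen
  have hmem𝒮 : sInf 𝒮 ∈ 𝒮 := csInf_mem hne
  obtain ⟨n, hn, hnpos, hprop⟩ := hmem𝒮
  have hAn : A.length = n := by
    have : (A.length : ℕ∞) = (n : ℕ∞) := by rw [hlen, davenportRel, ← h𝒮, hn]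
    exact_mod_cast this
  -- A is nonempty
  obtain ⟨a, tail, rfl⟩ : ∃ a tail, A = a :: tail := by
    cases A with
    | nil => simp at hAn; omega
    | cons a t => exact ⟨a, t, rfl⟩
  -- the modified list B
  have hBlen : ((s * a) :: tail).length = n := by simpa using hAn
  have hBprod : ((s * a) :: tail).prod = s * (a :: tail).prod := by
    simp [mul_assoc]
  have hBred : Reducible ((s * a) :: tail) :=
    hprop _ hBlen (by rw [hBprod]; exact hmem)
  obtain ⟨C, hCsub, hClen, hCprod⟩ := hBred
  rw [hBprod] at hCprod
  cases hCsub with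
  | cons _ hCtail =>
    -- C is a sublist of tail; then (a :: tail).prod ∈ T, so A itself is reducible
    have hCle : (C : Multiset S) ≤ (tail : Multiset S) := hCtail.subperm
    obtain ⟨D, hD⟩ := Multiset.le_iff_exists_add.mp hCle
    have htail : tail.prod = C.prod * D.prod := by
      have := congrArg Multiset.prod hD
      simpa [Multiset.prod_coe] using this
    have hAprodT : (a :: tail).prod ∈ T := by
      have : (a :: tail).prod = (a * D.prod) * C.prod := by
        simp only [List.prod_cons, htail]
        rw [mul_comm C.prod D.prod, ← mul_assoc]
      rw [this]
      exact hT _ _ (hCprod ▸ hmem)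
    obtain ⟨A₀, hA₀sub, hA₀len, hA₀prod⟩ := hprop (a :: tail) hAn hAprodT
    exact ⟨A₀, hA₀sub, hA₀len, by rw [hA₀prod]⟩
  | @cons_cons C' _ _ hC' =>
    -- C = (s * a) :: C' with C' <+ tail
    refine ⟨a :: C', List.Sublist.cons₂ a hC', ?_, ?_⟩
    · simpa using (by simpa using hClen : C'.length + 1 < tail.length + 1)
    · have : s * (a :: C').prod = ((s * a) :: C').prod := by
        simp [mul_assoc]
      rw [this, hCprod]
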